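/- Let f(w) = (w² + 2w − 1)/(w² − 2w − 1). Then |f(w)| ≤ 1 for all w in the closed half-disk {w ∈ ℂ : |w| ≤ 1 and Re(w) ≥ 0}. -/

import Mathlib

/-- With `f(w) = (w²+2w-1)/(w²-2w-1)`, `|f(w)| ≤ 1` on the closed half-disk
`{|w| ≤ 1, Re w ≥ 0}`. -/
theorem abs_fMap_le_one_on_halfDisk (w : ℂ) (hw : ‖w‖ ≤ 1) (hre : 0 ≤ w.re) :
    ‖(w ^ 2 + 2 * w - 1) / (w ^ 2 - 2 * w - 1)‖ ≤ 1 := by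
  by_cases hD : w ^ 2 - 2 * w - 1 = 0
  · simp [hD]
  · rw [norm_div, div_le_one (by simpa using (norm_pos_iff.mpr hD))]
    rw [Complex.norm_def, Complex.norm_def]
    apply Real.sqrt_le_sqrt
    have h1 : w.re ^ 2 + w.im ^ 2 ≤ 1 := by
      have := Complex.sq_norm w
      nlinarith [Complex.normSq_apply w, sq_nonneg ‖w‖,
        norm_nonneg w]
    simp only [Complex.normSq_apply, pow_two, Complex.sub_re, Complex.sub_im, Complex.add_re,
      Complex.add_im, Complex.mul_re, Complex.mul_im, Complex.one_re, Complex.one_im,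
      Complex.re_ofNat, Complex.im_ofNat]
    nlinarith [sq_nonneg w.im, sq_nonneg w.re, mul_nonneg hre (sub_nonneg.2 h1)]
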